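/- Let f be a nonzero entire function in the Fock space F² and β ∈ ℂ nonzero. Then the two functions U_β f and U_{−β} f are linearly independent in F², where (U_γ f)(z) = e^{−|γ|²/2 − conj(γ)z} f(z+γ). -/

import Mathlib

open Complex MeasureTheory

noncomputable def WeylOp (β : ℂ) (f : ℂ → ℂ) : ℂ → ℂ :=
  fun z => Complex.exp (-((‖β‖ : ℂ) ^ 2) / 2 - (starRingEnd ℂ) β * z) * f (z + β)

/-- Membership in the Fock space `F²`. -/
def MemFock (f : ℂ → ℂ) : Prop :=
  Differentiable ℂ f ∧
    Integrable (fun z : ℂ => ‖f z‖ ^ 2 * Real.exp (-‖z‖ ^ 2)) volume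

private lemma normSq_expand (w : ℂ) : ‖w‖ ^ 2 = w.re ^ 2 + w.im ^ 2 := by
  rw [Complex.sq_norm, Complex.normSq_apply]; ring

private lemma weyl_g (γ : ℂ) (f : ℂ → ℂ) (z : ℂ) :
    ‖WeylOp γ f z‖ ^ 2 * Real.exp (-‖z‖ ^ 2)
      = ‖f (z + γ)‖ ^ 2 * Real.exp (-‖z + γ‖ ^ 2) := by
  have h1 : (-((‖γ‖ : ℂ) ^ 2) / 2 - (starRingEnd ℂ) γ * z)
      = (((-‖γ‖ ^ 2 / 2 : ℝ)) : ℂ) - (starRingEnd ℂ) γ * z := by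
    push_cast; ring
  have h2 : ‖Complex.exp (-((‖γ‖ : ℂ) ^ 2) / 2 - (starRingEnd ℂ) γ * z)‖
      = Real.exp (-‖γ‖ ^ 2 / 2 - (γ.re * z.re + γ.im * z.im)) := by
    rw [h1, Complex.norm_exp]
    congr 1
    simp [Complex.sub_re, Complex.mul_re, Complex.conj_re, Complex.conj_im,
      ← Complex.ofReal_pow]
  have hre : (-‖γ‖ ^ 2 / 2 - (γ.re * z.re + γ.im * z.im))
      + (-‖γ‖ ^ 2 / 2 - (γ.re * z.re + γ.im * z.im)) + (-‖z‖ ^ 2) = -‖z + γ‖ ^ 2 := by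
    rw [normSq_expand z, normSq_expand (z + γ), normSq_expand γ]
    simp [Complex.add_re, Complex.add_im]
    ring
  unfold WeylOp
  rw [norm_mul, h2, mul_pow]
  calc Real.exp (-‖γ‖ ^ 2 / 2 - (γ.re * z.re + γ.im * z.im)) ^ 2 * ‖f (z + γ)‖ ^ 2
        * Real.exp (-‖z‖ ^ 2)
      = ‖f (z + γ)‖ ^ 2 * (Real.exp (-‖γ‖ ^ 2 / 2 - (γ.re * z.re + γ.im * z.im))
          * Real.exp (-‖γ‖ ^ 2 / 2 - (γ.re * z.re + γ.im * z.im))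
          * Real.exp (-‖z‖ ^ 2)) := by ring
    _ = ‖f (z + γ)‖ ^ 2 * Real.exp (-‖z + γ‖ ^ 2) := by
        rw [← Real.exp_add, ← Real.exp_add, hre]

theorem hrt_two_opposite_points (f : ℂ → ℂ) (hf : MemFock f) (hfne : ∃ z, f z ≠ 0)
    (β : ℂ) (hβ : β ≠ 0) :
    ∀ c₀ c₁ : ℂ, (∀ z : ℂ, c₀ * WeylOp β f z + c₁ * WeylOp (-β) f z = 0) →
      c₀ = 0 ∧ c₁ = 0 := by
  intro c₀ c₁ h
  obtain ⟨z₀, hz₀⟩ := hfne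
  set g : ℂ → ℝ := fun w => ‖f w‖ ^ 2 * Real.exp (-‖w‖ ^ 2) with hg
  have hgnn : ∀ w, 0 ≤ g w := fun w => mul_nonneg (sq_nonneg _) (Real.exp_pos _).le
  have hgcont : Continuous g := by
    have hfc : Continuous f := hf.1.continuous
    rw [hg]; fun_prop
  have hgint : Integrable g volume := hf.2
  have hWne : ∀ (γ : ℂ) (z : ℂ), f (z + γ) ≠ 0 → WeylOp γ f z ≠ 0 := by
    intro γ z hz
    exact mul_ne_zero (Complex.exp_ne_zero _) hz
  have hgz₀ : 0 < g z₀ := by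
    rw [hg]
    exact mul_pos (pow_pos (norm_pos_iff.mpr hz₀) 2) (Real.exp_pos _)
  have key : ∀ w : ℂ, ‖c₀‖ ^ 2 * g w = ‖c₁‖ ^ 2 * g (w - 2 * β) := by
    intro w
    have heq : c₀ * WeylOp β f (w - β) = -(c₁ * WeylOp (-β) f (w - β)) :=
      eq_neg_of_add_eq_zero_left (h (w - β))
    have hn : ‖c₀‖ * ‖WeylOp β f (w - β)‖ = ‖c₁‖ * ‖WeylOp (-β) f (w - β)‖ := by
      rw [← norm_mul, ← norm_mul, heq, norm_neg]
    have h₁ := weyl_g β f (w - β)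
    have h₂ := weyl_g (-β) f (w - β)
    rw [show w - β + β = w from by ring] at h₁
    rw [show w - β + -β = w - 2 * β from by ring] at h₂
    calc ‖c₀‖ ^ 2 * g w
        = (‖c₀‖ * ‖WeylOp β f (w - β)‖) ^ 2 * Real.exp (-‖w - β‖ ^ 2) := by
          simp only [hg]
          rw [← h₁]; ring
      _ = (‖c₁‖ * ‖WeylOp (-β) f (w - β)‖) ^ 2 * Real.exp (-‖w - β‖ ^ 2) := by rw [hn]
      _ = ‖c₁‖ ^ 2 * g (w - 2 * β) := by
          simp only [hg]
          rw [← h₂]; ring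
  have main : c₀ = 0 := by
    by_contra hc₀
    have hc₁ : c₁ ≠ 0 := by
      rintro rfl
      have h0 := h (z₀ - β)
      simp only [zero_mul, add_zero] at h0
      rcases mul_eq_zero.mp h0 with h' | h'
      · exact hc₀ h'
      · exact hWne β (z₀ - β) (by rw [show z₀ - β + β = z₀ from by ring]; exact hz₀) h'
    -- integral equality gives ‖c₀‖² = ‖c₁‖²
    have hInt2 : ∫ w, g (w - 2 * β) = ∫ w, g w := integral_sub_right_eq_self g (2 * β)
    have hII : ‖c₀‖ ^ 2 * ∫ w, g w = ‖c₁‖ ^ 2 * ∫ w, g w := by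
      calc ‖c₀‖ ^ 2 * ∫ w, g w = ∫ w, ‖c₀‖ ^ 2 * g w := (integral_const_mul _ _).symm
        _ = ∫ w, ‖c₁‖ ^ 2 * g (w - 2 * β) := by
            rw [show (fun w => ‖c₀‖ ^ 2 * g w) = fun w => ‖c₁‖ ^ 2 * g (w - 2 * β) from
              funext key]
        _ = ‖c₁‖ ^ 2 * ∫ w, g (w - 2 * β) := integral_const_mul _ _
        _ = ‖c₁‖ ^ 2 * ∫ w, g w := by rw [hInt2]
    -- continuity ball around z₀
    obtain ⟨δ, hδ, hball⟩ : ∃ δ > 0, ∀ w, dist w z₀ < δ → g z₀ / 2 ≤ g w := by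
      obtain ⟨δ, hδ, hd⟩ := Metric.continuousAt_iff.mp (hgcont.continuousAt (x := z₀))
        (g z₀ / 2) (by linarith)
      refine ⟨δ, hδ, fun w hw => ?_⟩
      have h1 := hd hw
      rw [Real.dist_eq] at h1
      have := abs_lt.mp h1
      linarith [this.1]
    set ε := min δ ‖β‖ with hεdef
    have hε0 : 0 < ε := lt_min hδ (norm_pos_iff.mpr hβ)
    set V := (volume (Metric.ball (0 : ℂ) ε)).toReal with hVdef
    have hV : 0 < V := by
      rw [hVdef]
      exact ENNReal.toReal_pos (Metric.measure_ball_pos volume 0 hε0).ne' measure_ball_lt_top.ne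
    -- positivity of ∫ g
    have hlow0 : g z₀ / 2 * V ≤ ∫ w in Metric.ball z₀ ε, g w := by
      have hpt : ∀ x ∈ Metric.ball z₀ ε, g z₀ / 2 ≤ g x := fun x hx =>
        hball x (lt_of_lt_of_le hx (min_le_left _ _))
      have h1 := setIntegral_ge_of_const_le_real measurableSet_ball measure_ball_lt_top.ne hpt
        hgint.integrableOn
      rwa [measureReal_def, Measure.addHaar_ball_center volume z₀ ε] at h1
    have hIpos : 0 < ∫ w, g w :=
      lt_of_lt_of_le (mul_pos (by linarith) hV)
        (hlow0.trans (setIntegral_le_integral hgint (Filter.Eventually.of_forall hgnn)))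
    have hcc : ‖c₀‖ ^ 2 = ‖c₁‖ ^ 2 := mul_right_cancel₀ hIpos.ne' hII
    have per : ∀ w, g w = g (w - 2 * β) := by
      intro w
      have hk := key w
      rw [hcc] at hk
      exact mul_left_cancel₀ (pow_ne_zero 2 (norm_ne_zero_iff.mpr hc₁)) hk
    have pern : ∀ (n : ℕ) (w : ℂ), g (w + n * (2 * β)) = g w := by
      intro n
      induction n with
      | zero => intro w; simp
      | succ n ih =>
        intro w
        rw [show (w : ℂ) + (n + 1 : ℕ) * (2 * β) = (w + 2 * β) + n * (2 * β) from by
          push_cast; ring, ih]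
        have := per (w + 2 * β)
        rw [show w + 2 * β - 2 * β = w from by ring] at this
        exact this
    -- lower bounds on translated balls
    have hlow : ∀ n : ℕ, g z₀ / 2 * V ≤ ∫ w in Metric.ball (z₀ + n * (2 * β)) ε, g w := by
      intro n
      have hpt : ∀ x ∈ Metric.ball (z₀ + n * (2 * β)) ε, g z₀ / 2 ≤ g x := by
        intro x hx
        have hx' : dist (x - n * (2 * β)) z₀ < ε := by
          rw [Metric.mem_ball, dist_eq_norm] at hx
          rw [dist_eq_norm,
            show x - n * (2 * β) - z₀ = x - (z₀ + n * (2 * β)) from by ring]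
          exact hx
        have h1 := hball _ (lt_of_lt_of_le hx' (min_le_left _ _))
        have h2 := pern n (x - n * (2 * β))
        rw [show x - n * (2 * β) + n * (2 * β) = x from by ring] at h2
        rw [h2]
        exact h1
      have h1 := setIntegral_ge_of_const_le_real measurableSet_ball measure_ball_lt_top.ne hpt
        hgint.integrableOn
      rwa [measureReal_def, Measure.addHaar_ball_center volume _ ε] at h1
    -- disjointness
    have hdisj : ∀ m n : ℕ, m ≠ n →
        Disjoint (Metric.ball (z₀ + m * (2 * β)) ε) (Metric.ball (z₀ + n * (2 * β)) ε) := by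
      intro m n hmn
      apply Metric.ball_disjoint_ball
      have hd : dist (z₀ + m * (2 * β)) (z₀ + n * (2 * β)) = |(m : ℝ) - n| * (2 * ‖β‖) := by
        rw [dist_eq_norm, show (z₀ + m * (2 * β)) - (z₀ + n * (2 * β))
          = ((m : ℂ) - n) * (2 * β) from by ring, norm_mul]
        congr 1
        · rw [show ((m : ℂ) - n) = (((m : ℝ) - n : ℝ) : ℂ) from by push_cast; ring]
          rw [Complex.norm_real, Real.norm_eq_abs]
        · rw [norm_mul]
          simp
      have h1 : (1 : ℝ) ≤ |(m : ℝ) - n| := by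
        have hz : ((m : ℤ)) ≠ (n : ℤ) := by exact_mod_cast hmn
        rw [show ((m : ℝ) - n) = (((m : ℤ) - n : ℤ) : ℝ) from by push_cast; ring,
          ← Int.cast_abs]
        exact_mod_cast Int.one_le_abs (sub_ne_zero.mpr hz)
      have hεβ : ε ≤ ‖β‖ := min_le_right _ _
      have hβ0 : (0 : ℝ) < ‖β‖ := norm_pos_iff.mpr hβ
      rw [hd]
      nlinarith
    -- summation bound
    have hsum : ∀ N : ℕ, (N : ℝ) * (g z₀ / 2 * V) ≤ ∫ w, g w := by
      intro N
      have hU := integral_biUnion_finset (μ := volume) (f := g) (Finset.range N)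
        (s := fun n : ℕ => Metric.ball (z₀ + n * (2 * β)) ε)
        (fun _ _ => measurableSet_ball)
        (fun m _ n _ hmn => hdisj m n hmn)
        (fun _ _ => hgint.integrableOn)
      have hle : ∫ w in ⋃ n ∈ Finset.range N, Metric.ball (z₀ + n * (2 * β)) ε, g w
          ≤ ∫ w, g w := setIntegral_le_integral hgint (Filter.Eventually.of_forall hgnn)
      rw [hU] at hle
      calc (N : ℝ) * (g z₀ / 2 * V)
          = ∑ _n ∈ Finset.range N, g z₀ / 2 * V := by
            rw [Finset.sum_const, Finset.card_range, nsmul_eq_mul]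
        _ ≤ ∑ n ∈ Finset.range N, ∫ w in Metric.ball (z₀ + n * (2 * β)) ε, g w :=
            Finset.sum_le_sum fun n _ => hlow n
        _ ≤ ∫ w, g w := hle
    obtain ⟨N, hN⟩ := exists_nat_gt ((∫ w, g w) / (g z₀ / 2 * V))
    have hpos : 0 < g z₀ / 2 * V := mul_pos (by linarith) hV
    have h2 := (div_lt_iff₀ hpos).mp hN
    linarith [hsum N]
  refine ⟨main, ?_⟩
  by_contra hc₁
  have h0 := h (z₀ + β)
  rw [main] at h0
  simp only [zero_mul, zero_add] at h0
  rcases mul_eq_zero.mp h0 with h' | h'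
  · exact hc₁ h'
  · exact hWne (-β) (z₀ + β) (by rw [show z₀ + β + -β = z₀ from by ring]; exact hz₀) h'
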